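/- Let P be a nonempty finitary unique-cover-modular poset in which any two elements are joined by a finite sequence of elements each consecutive pair of which is a covering pair in one direction or the other. Then P has a minimum element, i.e. there exists m ∈ P with m ≤ x for all x ∈ P. -/

import Mathlib

/-- A poset is finitary if every principal lower set is finite. -/
def Finitary (P : Type*) [PartialOrder P] : Prop :=
  ∀ x : P, {y : P | y ≤ x}.Finite

/-- A poset is unique-cover-modular if any two distinct elements covering a common
element, or covered by a common element, are covered by a unique common element and
cover a unique common element. -/
def UCM (P : Type*) [PartialOrder P] : Prop :=
  ∀ x y : P, x ≠ y →
    ((∃ a, a ⋖ x ∧ a ⋖ y) ∨ (∃ b, x ⋖ b ∧ y ⋖ b)) →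
    (∃! a, a ⋖ x ∧ a ⋖ y) ∧ (∃! b, x ⋖ b ∧ y ⋖ b)

private lemma chain_le {P : Type*} [PartialOrder P] :
    ∀ (n : ℕ) (c : ℕ → P), (∀ j < n, c j ⋖ c (j + 1)) → c 0 ≤ c n := by
  intro n
  induction n with
  | zero => intro c _; exact le_refl _
  | succ n ih =>
      intro c h
      exact (ih c (fun j hj => h j (Nat.lt_succ_of_lt hj))).trans
        (h n (Nat.lt_succ_self n)).le

/-- Between comparable elements there is a covering chain. -/
private lemma chainExists {P : Type*} [PartialOrder P] (hfin : Finitary P) :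
    ∀ (n : ℕ) (x b : P), x ≤ b → ({y | x < y ∧ y ≤ b}).ncard ≤ n →
      ∃ (m : ℕ) (c : ℕ → P), c 0 = x ∧ c m = b ∧ ∀ j < m, c j ⋖ c (j + 1) := by
  intro n
  induction n with
  | zero =>
      intro x b hxb hcard
      have hS : ({y | x < y ∧ y ≤ b}).Finite :=
        (hfin b).subset (fun y hy => hy.2)
      have hcard0 : ({y | x < y ∧ y ≤ b}).ncard = 0 := Nat.le_zero.mp hcard
      have hempty : ({y | x < y ∧ y ≤ b}) = ∅ := (Set.ncard_eq_zero hS).mp hcard0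
      have hxeq : x = b := by
        rcases lt_or_eq_of_le hxb with h | h
        · exact absurd (Set.eq_empty_iff_forall_notMem.mp hempty b ⟨h, le_refl b⟩)
            (fun h => h)
        · exact h
      exact ⟨0, fun _ => x, rfl, hxeq, fun j hj => absurd hj (Nat.not_lt_zero j)⟩
  | succ n ih =>
      intro x b hxb hcard
      rcases eq_or_lt_of_le hxb with h | h
      · exact ⟨0, fun _ => x, rfl, h, fun j hj => absurd hj (Nat.not_lt_zero j)⟩
      · set S : Set P := {y | x < y ∧ y ≤ b} with hSdef
        have hS : S.Finite := (hfin b).subset (fun y hy => hy.2)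
        have hne : S.Nonempty := ⟨b, h, le_refl b⟩
        obtain ⟨m, hmS, hmin⟩ := (by obtain ⟨m, hm⟩ := hS.exists_minimal hne; exact ⟨m, hm.1, fun d hd hdm => le_antisymm (hm.2 hd hdm) hdm⟩ :
            ∃ m ∈ S, ∀ d ∈ S, d ≤ m → m = d)
        -- x ⋖ m
        have hcov : x ⋖ m := by
          refine ⟨hmS.1, ?_⟩
          intro d hxd hdm
          have hdS : d ∈ S := ⟨hxd, hdm.le.trans hmS.2⟩
          have := hmin d hdS hdm.le
          exact absurd this.symm (ne_of_lt hdm)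
        -- recurse from m to b
        have hsub : ({y | m < y ∧ y ≤ b}) ⊂ S := by
          constructor
          · intro y hy; exact ⟨hmS.1.trans hy.1, hy.2⟩
          · intro hcon
            have : m ∈ ({y | m < y ∧ y ≤ b} : Set P) := hcon ⟨hmS.1, hmS.2⟩
            exact absurd this.1 (lt_irrefl m)
        have hlt : ({y | m < y ∧ y ≤ b}).ncard < S.ncard :=
          Set.ncard_lt_ncard hsub hS
        have hle : ({y | m < y ∧ y ≤ b}).ncard ≤ n :=
          Nat.lt_succ_iff.mp (lt_of_lt_of_le hlt hcard)
        obtain ⟨k, c, hc0, hck, hcc⟩ := ih m b hmS.2 hle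
        refine ⟨k + 1, fun j => if j = 0 then x else c (j - 1), by simp, ?_, ?_⟩
        · simp [hck]
        · intro j hj
          rcases Nat.eq_zero_or_pos j with h0 | h0
          · subst h0; simpa [hc0] using hcov
          · have h1 : j ≠ 0 := Nat.pos_iff_ne_zero.mp h0
            have h2 : j + 1 ≠ 0 := Nat.succ_ne_zero j
            simp only [h1, h2, if_false]
            have : j - 1 + 1 = j := Nat.succ_pred_eq_of_pos h0
            have hjk : j - 1 < k := by omega
            have h3 : j + 1 - 1 = j - 1 + 1 := by omega
            rw [h3]
            exact hcc (j - 1) hjk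

/-- If there is a covering chain from `x` to `b` and `a ⋖ b`, then `x` and `a` have a
common lower bound. -/
private lemma meetCov {P : Type*} [PartialOrder P] (hucm : UCM P) :
    ∀ (n : ℕ) (c : ℕ → P), (∀ j < n, c j ⋖ c (j + 1)) → ∀ a, a ⋖ c n →
      ∃ z, z ≤ c 0 ∧ z ≤ a := by
  intro n
  induction n with
  | zero => intro c _ a ha; exact ⟨a, ha.le, le_refl a⟩
  | succ n ih =>
      intro c hch a ha
      have hcn : c n ⋖ c (n + 1) := hch n (Nat.lt_succ_self n)
      by_cases hEq : a = c n
      · refine ⟨c 0, le_refl _, ?_⟩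
        rw [hEq]
        exact chain_le n c (fun j hj => hch j (Nat.lt_succ_of_lt hj))
      · obtain ⟨⟨d, hd, _⟩, _⟩ := hucm a (c n) hEq (Or.inr ⟨c (n + 1), ha, hcn⟩)
        obtain ⟨z, hz0, hzd⟩ :=
          ih c (fun j hj => hch j (Nat.lt_succ_of_lt hj)) d hd.2
        exact ⟨z, hz0, hzd.trans hd.1.le⟩

/-- A nonempty finitary unique-cover-modular poset that is connected by zig-zag covering
paths has a minimum element. -/
theorem stmt16 {P : Type*} [PartialOrder P] [Nonempty P]
    (hfin : Finitary P) (hucm : UCM P)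
    (hconn : ∀ a b : P, ∃ (m : ℕ) (y : ℕ → P), y 0 = a ∧ y m = b ∧
      ∀ j < m, y j ⋖ y (j + 1) ∨ y (j + 1) ⋖ y j) :
    ∃ m : P, ∀ x : P, m ≤ x := by
  -- downward directedness
  have hdir : ∀ a b : P, ∃ z, z ≤ a ∧ z ≤ b := by
    intro a b
    obtain ⟨m, y, h0, hm, hstep⟩ := hconn a b
    have key : ∀ j ≤ m, ∃ z, z ≤ y 0 ∧ z ≤ y j := by
      intro j
      induction j with
      | zero => intro _; exact ⟨y 0, le_refl _, le_refl _⟩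
      | succ j ihj =>
          intro hj
          obtain ⟨z, hz0, hzj⟩ := ihj (Nat.le_of_succ_le hj)
          rcases hstep j (Nat.lt_of_succ_le hj) with hc | hc
          · exact ⟨z, hz0, hzj.trans hc.le⟩
          · obtain ⟨k, c, hc0, hck, hcc⟩ :=
              chainExists hfin ({v | z < v ∧ v ≤ y j}).ncard z (y j) hzj (le_refl _)
            have ha : y (j + 1) ⋖ c k := by rwa [hck]
            obtain ⟨w, hwz, hwj⟩ := meetCov hucm k c hcc (y (j + 1)) ha
            rw [hc0] at hwz
            exact ⟨w, hwz.trans hz0, hwj⟩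
    obtain ⟨z, hz0, hzm⟩ := key m (le_refl m)
    rw [h0] at hz0; rw [hm] at hzm
    exact ⟨z, hz0, hzm⟩
  -- a minimal element exists
  obtain ⟨x0⟩ := ‹Nonempty P›
  have hS : ({y : P | y ≤ x0}).Finite := hfin x0
  obtain ⟨m, hmS, hmin⟩ :=
    (by obtain ⟨m, hm⟩ := hS.exists_minimal ⟨x0, le_refl x0⟩; exact ⟨m, hm.1, fun d hd hdm => le_antisymm (hm.2 hd hdm) hdm⟩ :
      ∃ m ∈ ({y : P | y ≤ x0}), ∀ d ∈ ({y : P | y ≤ x0}), d ≤ m → m = d)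
  refine ⟨m, fun x => ?_⟩
  obtain ⟨z, hzm, hzx⟩ := hdir m x
  have hzS : z ∈ ({y : P | y ≤ x0}) := hzm.trans hmS
  have : m = z := hmin z hzS hzm
  exact this ▸ hzx
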